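/- (Proposition 1) For every i ∈ {1, …, n}, the entity-membership probabilities form a valid probability distribution: Σ_{u=1}^{n} P(i,u) = 1. -/
import Mathlib


/-- Proposition 1: the entity-membership probabilities `P i ·` form a valid
probability distribution: for every `i ∈ {1, …, n}`, `∑_{u=1}^{n} P i u = 1`. -/
theorem entity_membership_is_distribution
    (n : ℕ) (hn : 1 ≤ n)
    (q : ℕ → ℕ → ℝ)
    (hq_nonneg : ∀ i, 1 ≤ i → i ≤ n → ∀ j, 1 ≤ j → j ≤ i → 0 ≤ q i j)
    (hq_sum : ∀ i, 1 ≤ i → i ≤ n → ∑ j ∈ Finset.Icc 1 i, q i j = 1)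
    (P : ℕ → ℕ → ℝ)
    (hP_gt : ∀ i u, 1 ≤ i → i ≤ n → 1 ≤ u → u ≤ n → i < u → P i u = 0)
    (hP_diag : ∀ i, 1 ≤ i → i ≤ n → P i i = q i i)
    (hP_lt : ∀ i u, 1 ≤ i → i ≤ n → 1 ≤ u → u ≤ n → u < i →
      P i u = ∑ j ∈ Finset.Icc u (i - 1), q i j * P j u) :
    ∀ i, 1 ≤ i → i ≤ n → ∑ u ∈ Finset.Icc 1 n, P i u = 1 := by
  intro i
  induction i using Nat.strong_induction_on with
  | _ i IH =>
  intro hi1 hin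
  -- restrict sum to u ≤ i since P i u = 0 for u > i
  have hrestrict : ∀ k, 1 ≤ k → k ≤ n →
      ∑ u ∈ Finset.Icc 1 n, P k u = ∑ u ∈ Finset.Icc 1 k, P k u := by
    intro k hk1 hkn
    refine (Finset.sum_subset ?_ ?_).symm
    · intro x hx
      simp only [Finset.mem_Icc] at *
      omega
    · intro x hx hx'
      simp only [Finset.mem_Icc] at hx hx'
      exact hP_gt k x hk1 hkn (by omega) (by omega) (by omega)
  rw [hrestrict i hi1 hin]
  obtain ⟨m, rfl⟩ : ∃ m, i = m + 1 := ⟨i - 1, by omega⟩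
  rw [Finset.sum_Icc_succ_top (by omega)]
  have hdiag : P (m + 1) (m + 1) = q (m + 1) (m + 1) := hP_diag _ hi1 hin
  have hlow : ∀ u ∈ Finset.Icc 1 m,
      P (m + 1) u = ∑ j ∈ Finset.Icc u m, q (m + 1) j * P j u := by
    intro u hu
    simp only [Finset.mem_Icc] at hu
    have := hP_lt (m + 1) u hi1 hin hu.1 (by omega) (by omega)
    simpa using this
  rw [Finset.sum_congr rfl hlow]
  have hswap : ∑ u ∈ Finset.Icc 1 m, ∑ j ∈ Finset.Icc u m, q (m + 1) j * P j u
      = ∑ j ∈ Finset.Icc 1 m, ∑ u ∈ Finset.Icc 1 j, q (m + 1) j * P j u := by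
    refine Finset.sum_comm' ?_
    intro x y
    simp only [Finset.mem_Icc]
    omega
  rw [hswap]
  have hinner : ∀ j ∈ Finset.Icc 1 m,
      ∑ u ∈ Finset.Icc 1 j, q (m + 1) j * P j u = q (m + 1) j := by
    intro j hj
    simp only [Finset.mem_Icc] at hj
    rw [← Finset.mul_sum, ← hrestrict j hj.1 (by omega), IH j (by omega) hj.1 (by omega),
      mul_one]
  rw [Finset.sum_congr rfl hinner, hdiag, ← hq_sum (m + 1) hi1 hin,
    Finset.sum_Icc_succ_top (by omega)]
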